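/- Let (X,ρ,W) be a hyperbolic space, C ⊆ X nonempty convex, (M,d) a metric space with the AFPP for nonexpansive mappings, δ : M → C nonexpansive, and T : (C × M)_∞ → (C × M)_∞ nonexpansive. Assume there is φ : (0,∞) → (0,∞) such that for all ε > 0 and all u ∈ M there exists x* ∈ C with ρ(δ(u), x*) ≤ φ(ε) and ρ(x*, T_u(x*)) ≤ ε. Then r_H(T) = 0, i.e., inf{d_∞(h, T(h)) : h ∈ (C×M)_∞} = 0. -/

import Mathlib

open Metric Set

/-- Krasnoselski-Mann iteration: x₀ := x, x_{n+1} := W(x_n, T(x_n), λ_n). -/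
def KM {X : Type*} (W : X → X → ℝ → X) (T : X → X) (lam : ℕ → ℝ) (x : X) : ℕ → X
  | 0 => x
  | n + 1 => W (KM W T lam x n) (T (KM W T lam x n)) (lam n)

/-- M has the approximate fixed point property for nonexpansive mappings. -/
def AFPP (M : Type*) [MetricSpace M] : Prop :=
  ∀ S : M → M, (∀ u v : M, dist (S u) (S v) ≤ dist u v) →
    sInf {r : ℝ | ∃ u : M, r = dist u (S u)} = 0

/-- Anchored (Halpern-type) iteration: z₀ = a, z_{n+1} = W(a, g(z_n), l). -/
def anchored {X : Type*} (W : X → X → ℝ → X) (a : X) (g : X → X) (l : ℝ) : ℕ → X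
  | 0 => a
  | n + 1 => W a (g (anchored W a g l n)) l

/-- If approximate fixed points of each T_u can be found at uniformly bounded distance
from δ(u), then r_H(T) = 0. -/
theorem rH_eq_zero_of_uniform_approx {X M : Type*} [MetricSpace X] [MetricSpace M] [Nonempty M]
    (W : X → X → ℝ → X)
    (hW1 : ∀ x y z : X, ∀ l ∈ Set.Icc (0:ℝ) 1,
      dist z (W x y l) ≤ (1 - l) * dist z x + l * dist z y)
    (hW2 : ∀ x y : X, ∀ l ∈ Set.Icc (0:ℝ) 1, ∀ l' ∈ Set.Icc (0:ℝ) 1,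
      dist (W x y l) (W x y l') = |l - l'| * dist x y)
    (hW3 : ∀ x y : X, ∀ l ∈ Set.Icc (0:ℝ) 1, W x y l = W y x (1 - l))
    (hW4 : ∀ x y z w : X, ∀ l ∈ Set.Icc (0:ℝ) 1,
      dist (W x z l) (W y w l) ≤ (1 - l) * dist x y + l * dist z w)
    (C : Set X) (hC : C.Nonempty)
    (hconv : ∀ x ∈ C, ∀ y ∈ C, ∀ l ∈ Set.Icc (0:ℝ) 1, W x y l ∈ C)
    (hM : AFPP M)
    (δ : M → X) (hδC : ∀ u, δ u ∈ C)
    (hδne : ∀ u v : M, dist (δ u) (δ v) ≤ dist u v)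
    (T : X × M → X × M)
    (hT1 : ∀ x ∈ C, ∀ u : M, (T (x, u)).1 ∈ C)
    (hTne : ∀ p q : X × M, p.1 ∈ C → q.1 ∈ C → dist (T p) (T q) ≤ dist p q)
    (φ : ℝ → ℝ) (hφpos : ∀ ε > (0:ℝ), 0 < φ ε)
    (hφ : ∀ ε > (0:ℝ), ∀ u : M, ∃ xstar ∈ C,
      dist (δ u) xstar ≤ φ ε ∧ dist xstar (T (xstar, u)).1 ≤ ε) :
    sInf {r : ℝ | ∃ x ∈ C, ∃ u : M, r = dist (x, u) (T (x, u))} = 0 := by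
  set A : Set ℝ := {r : ℝ | ∃ x ∈ C, ∃ u : M, r = dist (x, u) (T (x, u))} with hA
  have hAbdd : ∀ r ∈ A, (0:ℝ) ≤ r := by
    rintro r ⟨x, hx, u, rfl⟩; exact dist_nonneg
  obtain ⟨x₀, hx₀⟩ := hC
  have hAne : A.Nonempty := ⟨_, x₀, hx₀, Classical.arbitrary M, rfl⟩
  -- product metric helpers
  have hfst : ∀ p q : X × M, dist p.1 q.1 ≤ dist p q := by
    intro p q; rw [Prod.dist_eq]; exact le_max_left _ _
  have hsnd : ∀ p q : X × M, dist p.2 q.2 ≤ dist p q := by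
    intro p q; rw [Prod.dist_eq]; exact le_max_right _ _
  have key : ∀ ε : ℝ, 0 < ε → ∃ r ∈ A, r < ε := by
    intro ε hε
    have hε₁ : (0:ℝ) < ε / 4 := by linarith
    set ε₁ : ℝ := ε / 4 with hε₁def
    set b : ℝ := φ ε₁ with hbdef
    have hb : 0 < b := hφpos ε₁ hε₁
    have hden : (0:ℝ) < 4 * (2 * b + ε) := by nlinarith
    set s : ℝ := ε / (4 * (2 * b + ε)) with hsdef
    have hs0 : 0 < s := div_pos hε hden
    have hs1 : s < 1 := by
      rw [hsdef, div_lt_one hden]; nlinarith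
    have hl : (1 - s) ∈ Set.Icc (0:ℝ) 1 := ⟨by linarith, by linarith⟩
    have hsB : s * (2 * b + ε) = ε / 4 := by
      rw [hsdef]; field_simp
    have hsE : s * (ε₁ / s) = ε₁ := by
      field_simp
    have W1' : ∀ x y zz : X, dist zz (W x y (1 - s)) ≤ s * dist zz x + (1 - s) * dist zz y := by
      intro x y zz
      have h := hW1 x y zz (1 - s) hl
      have he : (1:ℝ) - (1 - s) = s := by ring
      rwa [he] at h
    have W4' : ∀ x y zz w : X,
        dist (W x zz (1 - s)) (W y w (1 - s)) ≤ s * dist x y + (1 - s) * dist zz w := by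
      intro x y zz w
      have h := hW4 x y zz w (1 - s) hl
      have he : (1:ℝ) - (1 - s) = s := by ring
      rwa [he] at h
    -- nonexpansiveness of x ↦ (T (x,u)).1
    have hTu : ∀ (u : M) (x y : X), x ∈ C → y ∈ C →
        dist (T (x, u)).1 (T (y, u)).1 ≤ dist x y := by
      intro u x y hx hy
      have h3 := hfst (T (x, u)) (T (y, u))
      have h4 := hTne (x, u) (y, u) hx hy
      have h6 : dist ((x, u) : X × M) (y, u) = dist x y := by
        rw [Prod.dist_eq]
        show max (dist x y) (dist u u) = dist x y
        rw [dist_self]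
        exact max_eq_left dist_nonneg
      rw [h6] at h4
      exact h3.trans h4
    -- the anchored iteration
    set z : M → ℕ → X := fun u => anchored W (δ u) (fun x => (T (x, u)).1) (1 - s) with hzdef
    have hz0 : ∀ u, z u 0 = δ u := fun u => rfl
    have hzS : ∀ u n, z u (n + 1) = W (δ u) ((T (z u n, u)).1) (1 - s) := fun u n => rfl
    have hzC : ∀ u n, z u n ∈ C := by
      intro u n
      induction n with
      | zero => rw [hz0]; exact hδC u
      | succ n ih => rw [hzS]; exact hconv _ (hδC u) _ (hT1 _ ih u) _ hl
    -- nonexpansiveness in u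
    have hzne : ∀ (n : ℕ) (u v : M), dist (z u n) (z v n) ≤ dist u v := by
      intro n
      induction n with
      | zero => intro u v; rw [hz0, hz0]; exact hδne u v
      | succ n ih =>
        intro u v
        rw [hzS u n, hzS v n]
        have h1 := W4' (δ u) (δ v) ((T (z u n, u)).1) ((T (z v n, v)).1)
        have h2 : dist ((T (z u n, u)).1) ((T (z v n, v)).1) ≤ dist u v := by
          have h3 := hfst (T (z u n, u)) (T (z v n, v))
          have h4 := hTne (z u n, u) (z v n, v) (hzC u n) (hzC v n)
          rw [Prod.dist_eq] at h4
          have h5 : max (dist (z u n) (z v n)) (dist u v) ≤ dist u v :=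
            max_le (ih u v) le_rfl
          exact h3.trans (h4.trans h5)
        have h6 := hδne u v
        nlinarith [mul_le_mul_of_nonneg_left h6 hs0.le,
          mul_le_mul_of_nonneg_left h2 (by linarith : (0:ℝ) ≤ 1 - s)]
    set B : ℝ := 2 * b + ε₁ with hBdef
    have hB : 0 < B := by rw [hBdef]; positivity
    -- main per-u estimate
    have hmain : ∀ (u : M) (n : ℕ),
        dist (z u n) ((T (z u n, u)).1) ≤ (1 - s) ^ n * B + ε / 2 := by
      intro u
      obtain ⟨q, hqC, hq1, hq2⟩ := hφ ε₁ hε₁ u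
      have hδf : dist (δ u) ((T (δ u, u)).1) ≤ B := by
        have h1 : dist ((T (q, u)).1) ((T (δ u, u)).1) ≤ dist q (δ u) :=
          hTu u q (δ u) hqC (hδC u)
        have h2 : dist q (δ u) = dist (δ u) q := dist_comm _ _
        have h3 := dist_triangle4 (δ u) q ((T (q, u)).1) ((T (δ u, u)).1)
        have h4 : dist q ((T (q, u)).1) ≤ ε₁ := hq2
        rw [hBdef]; linarith
      -- geometric decay of consecutive distances
      have hdec : ∀ n : ℕ, dist (z u (n + 1)) (z u n) ≤ (1 - s) ^ n * B := by
        intro n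
        induction n with
        | zero =>
          have h := W1' (δ u) ((T (δ u, u)).1) (δ u)
          simp only [dist_self, mul_zero, zero_add] at h
          rw [hzS u 0, hz0 u, dist_comm, pow_zero, one_mul]
          calc dist (δ u) (W (δ u) ((T (δ u, u)).1) (1 - s))
              ≤ (1 - s) * dist (δ u) ((T (δ u, u)).1) := h
            _ ≤ B := by
                nlinarith [dist_nonneg (x := δ u) (y := (T (δ u, u)).1)]
        | succ n ih =>
          have h := W4' (δ u) (δ u) ((T (z u (n + 1), u)).1) ((T (z u n, u)).1)
          rw [← hzS u (n + 1), ← hzS u n] at h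
          simp only [dist_self, mul_zero, zero_add] at h
          have h2 : dist ((T (z u (n + 1), u)).1) ((T (z u n, u)).1)
              ≤ dist (z u (n + 1)) (z u n) := hTu u _ _ (hzC u (n + 1)) (hzC u n)
          calc dist (z u (n + 1 + 1)) (z u (n + 1))
              ≤ (1 - s) * dist ((T (z u (n + 1), u)).1) ((T (z u n, u)).1) := h
            _ ≤ (1 - s) * ((1 - s) ^ n * B) := by
                apply mul_le_mul_of_nonneg_left (h2.trans ih) (by linarith)
            _ = (1 - s) ^ (n + 1) * B := by ring
      -- orbit stays near q
      have horb : ∀ n : ℕ, dist (z u n) q ≤ b + ε₁ / s := by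
        intro n
        induction n with
        | zero =>
          rw [hz0]
          have : 0 ≤ ε₁ / s := by positivity
          linarith
        | succ n ih =>
          have h := W1' (δ u) ((T (z u n, u)).1) q
          rw [← hzS u n] at h
          have h2 : dist q ((T (z u n, u)).1) ≤ ε₁ + dist (z u n) q := by
            calc dist q ((T (z u n, u)).1)
                ≤ dist q ((T (q, u)).1) + dist ((T (q, u)).1) ((T (z u n, u)).1) :=
                  dist_triangle _ _ _
              _ ≤ ε₁ + dist q (z u n) := add_le_add hq2 (hTu u q (z u n) hqC (hzC u n))
              _ = ε₁ + dist (z u n) q := by rw [dist_comm]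
          have h3 : dist q (δ u) ≤ b := by rw [dist_comm]; exact hq1
          rw [dist_comm]
          have h4 : s * dist q (δ u) ≤ s * b := mul_le_mul_of_nonneg_left h3 hs0.le
          have h5 : (1 - s) * dist q ((T (z u n, u)).1) ≤ (1 - s) * (ε₁ + (b + ε₁ / s)) := by
            apply mul_le_mul_of_nonneg_left _ (by linarith : (0:ℝ) ≤ 1 - s)
            linarith
          nlinarith [mul_nonneg hs0.le hε₁.le]
      -- conclusion
      intro n
      have h1 : dist (z u n) (z u (n + 1)) ≤ (1 - s) ^ n * B := by
        rw [dist_comm]; exact hdec n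
      have h2 : dist (z u (n + 1)) ((T (z u n, u)).1) ≤ s * dist ((T (z u n, u)).1) (δ u) := by
        have h := W1' (δ u) ((T (z u n, u)).1) ((T (z u n, u)).1)
        rw [← hzS u n] at h
        simp only [dist_self, mul_zero, add_zero] at h
        rw [dist_comm]
        linarith
      have h3 : dist ((T (z u n, u)).1) (δ u) ≤ 2 * b + ε₁ + ε₁ / s := by
        have t1 : dist ((T (z u n, u)).1) ((T (q, u)).1) ≤ dist (z u n) q :=
          hTu u _ _ (hzC u n) hqC
        have t2 : dist ((T (q, u)).1) q = dist q ((T (q, u)).1) := dist_comm _ _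
        have t3 : dist q (δ u) = dist (δ u) q := dist_comm _ _
        have t4 := dist_triangle4 ((T (z u n, u)).1) ((T (q, u)).1) q (δ u)
        have t5 := horb n
        linarith [hq2, hq1]
      have h4 : s * dist ((T (z u n, u)).1) (δ u) ≤ s * (2 * b + ε₁ + ε₁ / s) :=
        mul_le_mul_of_nonneg_left h3 hs0.le
      have h5 : s * (2 * b + ε₁ + ε₁ / s) ≤ ε / 2 := by
        have e2 : s * (2 * b + ε₁) ≤ s * (2 * b + ε) := by
          apply mul_le_mul_of_nonneg_left _ hs0.le
          rw [hε₁def]; linarith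
        have hexp : s * (2 * b + ε₁ + ε₁ / s) = s * (2 * b + ε₁) + s * (ε₁ / s) := by ring
        rw [hexp, hsE]
        linarith [e2, hsB, hε₁def]
      calc dist (z u n) ((T (z u n, u)).1)
          ≤ dist (z u n) (z u (n + 1)) + dist (z u (n + 1)) ((T (z u n, u)).1) :=
            dist_triangle _ _ _
        _ ≤ (1 - s) ^ n * B + ε / 2 := add_le_add h1 (h2.trans (h4.trans h5))
    -- choose N with geometric term small
    obtain ⟨N, hN⟩ : ∃ N : ℕ, (1 - s) ^ N * B ≤ ε / 4 := by
      obtain ⟨N, hN⟩ := exists_pow_lt_of_lt_one (div_pos (by linarith : (0:ℝ) < ε / 4) hB)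
        (by linarith : 1 - s < 1)
      refine ⟨N, ?_⟩
      have := mul_lt_mul_of_pos_right hN hB
      rw [div_mul_cancel₀ _ hB.ne'] at this
      linarith
    have happN : ∀ u : M, dist (z u N) ((T (z u N, u)).1) ≤ 3 * ε / 4 := by
      intro u
      have := hmain u N
      linarith
    -- the nonexpansive map on M
    set S : M → M := fun u => (T (z u N, u)).2 with hSdef
    have hSne : ∀ u v : M, dist (S u) (S v) ≤ dist u v := by
      intro u v
      have h3 := hsnd (T (z u N, u)) (T (z v N, v))
      have h4 := hTne (z u N, u) (z v N, v) (hzC u N) (hzC v N)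
      rw [Prod.dist_eq] at h4
      have h5 : max (dist (z u N) (z v N)) (dist u v) ≤ dist u v :=
        max_le (hzne N u v) le_rfl
      exact h3.trans (h4.trans h5)
    have hu₀ : ∃ u₀ : M, dist u₀ (S u₀) < ε / 4 := by
      by_contra hcon
      push_neg at hcon
      have hge : ε / 4 ≤ sInf {r : ℝ | ∃ u : M, r = dist u (S u)} := by
        have hne2 : {r : ℝ | ∃ u : M, r = dist u (S u)}.Nonempty :=
          ⟨dist (Classical.arbitrary M) (S (Classical.arbitrary M)),
            Set.mem_setOf.mpr ⟨Classical.arbitrary M, rfl⟩⟩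
        apply le_csInf hne2
        rintro r ⟨u, rfl⟩
        exact hcon u
      rw [hM S hSne] at hge
      linarith
    obtain ⟨u₀, hu₀⟩ := hu₀
    have hmem : dist ((z u₀ N, u₀) : X × M) (T (z u₀ N, u₀)) ∈ A := by
      rw [hA]
      exact Set.mem_setOf.mpr ⟨z u₀ N, hzC u₀ N, u₀, rfl⟩
    refine ⟨_, hmem, ?_⟩
    rw [Prod.dist_eq]
    apply max_lt
    · have := happN u₀
      calc dist ((z u₀ N, u₀) : X × M).1 ((T (z u₀ N, u₀)).1)
          = dist (z u₀ N) ((T (z u₀ N, u₀)).1) := rfl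
        _ < ε := by linarith
    · calc dist ((z u₀ N, u₀) : X × M).2 ((T (z u₀ N, u₀)).2)
          = dist u₀ (S u₀) := rfl
        _ < ε := by linarith
  -- conclude
  have hbdd : BddBelow A := ⟨0, fun r hr => hAbdd r hr⟩
  have h1 : sInf A ≤ 0 := by
    by_contra h
    push_neg at h
    obtain ⟨r, hrA, hr⟩ := key (sInf A) h
    exact absurd (csInf_le hbdd hrA) (by linarith)
  have h2 : 0 ≤ sInf A := le_csInf hAne hAbdd
  linarith
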